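/- arXiv:2308.10448 — 2 statements merged into one kernel-verified Lean document; each statement's English description precedes it below -/
import Mathlib

section
/- Let B ∈ ℝ^{n×d} be a polydiagonal basis matrix (entries in {−1,0,1}, at most one nonzero per row, rank d), let f : ℝ^k → ℝ^k be an odd function, and define F : (ℝ^k)ⁿ → (ℝ^k)ⁿ componentwise by F(x)_i = f(x_i). Then for all y ∈ (ℝ^k)^d and all ℓ, (B⁺F(By))_ℓ = f(y_ℓ), where B⁺ = (BᵀB)⁻¹Bᵀ acts blockwise. -/
open Matrix

/-- Proposition (uncoupled cells, odd internal dynamics): for a polydiagonal basis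
matrix `B` and an odd `f : ℝᵏ → ℝᵏ`, the uncoupled map `F(x)ᵢ = f(xᵢ)` restricted to
the invariant subspace satisfies `(B⁺ F(By))_ℓ = f(y_ℓ)`. -/
theorem uncoupled_restriction_odd {n d k : ℕ} (B : Matrix (Fin n) (Fin d) ℝ)
    (hentries : ∀ i j, B i j = -1 ∨ B i j = 0 ∨ B i j = 1)
    (hrow : ∀ i, (Finset.univ.filter fun j => B i j ≠ 0).card ≤ 1)
    (hrank : B.rank = d)
    (f : (Fin k → ℝ) → (Fin k → ℝ)) (hodd : ∀ v, f (-v) = -f v) :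
    ∀ (y : Fin d → (Fin k → ℝ)) (ℓ : Fin d),
      (∑ i : Fin n, ((Bᵀ * B)⁻¹ * Bᵀ) ℓ i • f (∑ m : Fin d, B i m • y m)) = f (y ℓ) := by
  intro y ℓ
  -- at most one nonzero per row
  have hone : ∀ (i : Fin n) (j m : Fin d), j ≠ m → B i j ≠ 0 → B i m = 0 := by
    intro i j m hjm hj
    by_contra hm
    have hsub : ({j, m} : Finset (Fin d)) ⊆ Finset.univ.filter fun j => B i j ≠ 0 := by
      intro x hx
      simp only [Finset.mem_insert, Finset.mem_singleton] at hx
      rcases hx with rfl | rfl <;> simp [hj, hm]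
    have h2 : ({j, m} : Finset (Fin d)).card = 2 := Finset.card_pair hjm
    have h3 := Finset.card_le_card hsub
    have h4 := hrow i
    rw [h2] at h3
    omega
  set c : Fin d → ℝ := fun j => ∑ i, B i j * B i j with hc_def
  have hdiag : Bᵀ * B = Matrix.diagonal c := by
    ext j j'
    by_cases h : j = j'
    · subst h; simp [Matrix.mul_apply, Matrix.diagonal_apply_eq, hc_def, Matrix.transpose_apply]
    · rw [Matrix.diagonal_apply_ne _ h, Matrix.mul_apply]
      apply Finset.sum_eq_zero
      intro i _
      rcases eq_or_ne (B i j) 0 with h0 | h0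
      · simp [Matrix.transpose_apply, h0]
      · simp [Matrix.transpose_apply, hone i j j' h h0]
  -- all diagonal entries nonzero
  have hc : ∀ j, c j ≠ 0 := by
    have hr : (Matrix.diagonal c).rank = d := by
      rw [← hdiag, Matrix.rank_transpose_mul_self, hrank]
    rw [Matrix.rank_diagonal, Fintype.card_subtype] at hr
    have huniv : (Finset.univ.filter fun j => c j ≠ 0) = Finset.univ := by
      apply Finset.eq_univ_of_card
      simpa using hr
    intro j
    have : j ∈ Finset.univ.filter fun j => c j ≠ 0 := by
      rw [huniv]; exact Finset.mem_univ j
    exact (Finset.mem_filter.mp this).2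
  -- entry of the pseudoinverse
  have hinv : (Matrix.diagonal c)⁻¹ = Matrix.diagonal (fun j => (c j)⁻¹) := by
    apply Matrix.inv_eq_right_inv
    rw [Matrix.diagonal_mul_diagonal]
    convert Matrix.diagonal_one with j
    exact mul_inv_cancel₀ (hc j)
  have hentry : ∀ i, ((Bᵀ * B)⁻¹ * Bᵀ) ℓ i = (c ℓ)⁻¹ * B i ℓ := by
    intro i
    rw [hdiag, hinv, Matrix.diagonal_mul, Matrix.transpose_apply]
  have hf0 : f 0 = 0 := by
    have h := hodd 0
    rw [neg_zero] at h
    funext j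
    have := congrFun h j
    simp only [Pi.neg_apply, Pi.zero_apply] at this ⊢
    linarith
  -- per-row computation
  have hrowterm : ∀ i : Fin n,
      ((c ℓ)⁻¹ * B i ℓ) • f (∑ m : Fin d, B i m • y m)
        = ((c ℓ)⁻¹ * (B i ℓ * B i ℓ)) • f (y ℓ) := by
    intro i
    rcases hentries i ℓ with h | h | h
    · have hsum : (∑ m : Fin d, B i m • y m) = B i ℓ • y ℓ := by
        apply Finset.sum_eq_single ℓ
        · intro m _ hm
          rw [hone i ℓ m (Ne.symm hm) (by rw [h]; norm_num), zero_smul]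
        · simp
      rw [hsum, h]
      have : ((-1 : ℝ)) • y ℓ = -(y ℓ) := by simp
      rw [this, hodd]
      ext j
      simp only [Pi.smul_apply, Pi.neg_apply, smul_eq_mul]
      ring
    · rw [h]
      simp
    · have hsum : (∑ m : Fin d, B i m • y m) = B i ℓ • y ℓ := by
        apply Finset.sum_eq_single ℓ
        · intro m _ hm
          rw [hone i ℓ m (Ne.symm hm) (by rw [h]; norm_num), zero_smul]
        · simp
      rw [hsum, h]
      simp
  calc (∑ i : Fin n, ((Bᵀ * B)⁻¹ * Bᵀ) ℓ i • f (∑ m : Fin d, B i m • y m))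
      = ∑ i : Fin n, ((c ℓ)⁻¹ * (B i ℓ * B i ℓ)) • f (y ℓ) := by
        refine Finset.sum_congr rfl fun i _ => ?_
        rw [hentry i, hrowterm i]
    _ = ((c ℓ)⁻¹ * c ℓ) • f (y ℓ) := by
        rw [← Finset.sum_smul, ← Finset.mul_sum, hc_def]
    _ = f (y ℓ) := by rw [inv_mul_cancel₀ (hc ℓ), one_smul]
end

section
/- Let M ∈ ℝ^{n×n}, H ∈ ℝ^{k×k}, f : ℝ × ℝ^k → ℝ^k, and B ∈ ℝ^{n×d} a polydiagonal basis matrix with col(B) M-invariant. Define F(s,x)_i = f(s, x_i) + H·(Mx)_i. If f(s,·) is odd for each s (or B is a synchrony basis matrix), then the restricted map F_B(s,y) := B⁺F(s, By) satisfies F_B(s,y)_ℓ = f(s, y_ℓ) + H·((B⁺MB)y)_ℓ for all ℓ. -/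
open Matrix


private lemma sum_comm3 {α β γ V : Type*} [Fintype α] [Fintype β] [Fintype γ]
    [AddCommMonoid V] (F : α → β → γ → V) :
    ∑ i, ∑ j, ∑ m, F i j m = ∑ m, ∑ j, ∑ i, F i j m :=
  calc ∑ i, ∑ j, ∑ m, F i j m
      = ∑ j, ∑ i, ∑ m, F i j m := Finset.sum_comm
    _ = ∑ j, ∑ m, ∑ i, F i j m := Finset.sum_congr rfl (fun _ _ => Finset.sum_comm)
    _ = ∑ m, ∑ j, ∑ i, F i j m := Finset.sum_comm


/-- Proposition (restriction of a coupled cell system): for a polydiagonal basis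
matrix `B` with `col(B)` `M`-invariant, and `F(s,x)ᵢ = f(s,xᵢ) + H·(Mx)ᵢ`, if
`f(s,·)` is odd for each `s` or `B` is a synchrony basis matrix, then
`F_B(s,y)_ℓ = f(s,y_ℓ) + H·((B⁺MB)y)_ℓ`. -/
theorem coupled_restriction {n d k : ℕ} (M : Matrix (Fin n) (Fin n) ℝ)
    (H : Matrix (Fin k) (Fin k) ℝ) (f : ℝ → (Fin k → ℝ) → (Fin k → ℝ))
    (B : Matrix (Fin n) (Fin d) ℝ)
    (hentries : ∀ i j, B i j = -1 ∨ B i j = 0 ∨ B i j = 1)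
    (hrow : ∀ i, (Finset.univ.filter fun j => B i j ≠ 0).card ≤ 1)
    (hrank : B.rank = d)
    (hMinv : LinearMap.range (M * B).mulVecLin ≤ LinearMap.range B.mulVecLin)
    (hcase : (∀ s v, f s (-v) = -f s v) ∨
      (∀ i, (Finset.univ.filter fun j => B i j = 1).card = 1)) :
    ∀ (s : ℝ) (y : Fin d → (Fin k → ℝ)) (ℓ : Fin d),
      (∑ i : Fin n, ((Bᵀ * B)⁻¹ * Bᵀ) ℓ i •
          (f s (∑ m : Fin d, B i m • y m) +
            H.mulVec (∑ j : Fin n, M i j • (∑ m : Fin d, B j m • y m)))) =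
        f s (y ℓ) + H.mulVec (∑ m : Fin d, (((Bᵀ * B)⁻¹ * Bᵀ) * M * B) ℓ m • y m) := by
  intro s y ℓ
  set w : Fin d → ℝ := fun ℓ => ((Finset.univ.filter fun i => B i ℓ ≠ 0).card : ℝ) with hw
  -- rows have at most one nonzero
  have hone : ∀ i (j j' : Fin d), B i j ≠ 0 → B i j' ≠ 0 → j = j' := by
    intro i j j' hj hj'
    exact (Finset.card_le_one.mp (hrow i)) j (by simp [hj]) j' (by simp [hj'])
  -- BᵀB is diagonal
  have hdiag : Bᵀ * B = Matrix.diagonal w := by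
    ext a b
    rw [Matrix.mul_apply, Matrix.diagonal_apply]
    by_cases h : a = b
    · subst h
      rw [if_pos rfl]
      show _ = ((Finset.univ.filter fun i => B i a ≠ 0).card : ℝ)
      rw [Finset.card_filter]
      push_cast
      apply Finset.sum_congr rfl
      intro i _
      rcases hentries i a with h | h | h <;> simp [Matrix.transpose_apply, h]
    · rw [if_neg h]
      apply Finset.sum_eq_zero
      intro i _
      by_contra hne
      have ha : B i a ≠ 0 := fun h0 => hne (by simp [Matrix.transpose_apply, h0])
      have hb : B i b ≠ 0 := fun h0 => hne (by simp [Matrix.transpose_apply, h0])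
      exact h (hone i a b ha hb)
  -- all diagonal entries nonzero
  have hwne : ∀ a, w a ≠ 0 := by
    intro a
    have h1 : (Matrix.diagonal w).rank = d := by
      rw [← hdiag, Matrix.rank_transpose_mul_self, hrank]
    rw [Matrix.rank_diagonal] at h1
    have h2 : (Finset.univ.filter fun i : Fin d => w i ≠ 0).card
        = (Finset.univ : Finset (Fin d)).card := by
      rw [← Fintype.card_subtype, h1, Finset.card_univ, Fintype.card_fin]
    exact Finset.filter_card_eq h2 a (Finset.mem_univ a)
  -- the inverse of BᵀB
  have hinv : (Bᵀ * B)⁻¹ = Matrix.diagonal (fun a => (w a)⁻¹) := by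
    rw [hdiag]
    apply Matrix.inv_eq_right_inv
    rw [Matrix.diagonal_mul_diagonal, ← Matrix.diagonal_one]
    exact congrArg Matrix.diagonal (funext fun a => mul_inv_cancel₀ (hwne a))

  -- pseudoinverse entries
  have hpinv : ∀ i, ((Bᵀ * B)⁻¹ * Bᵀ) ℓ i = (w ℓ)⁻¹ * B i ℓ := by
    intro i
    rw [hinv, Matrix.diagonal_mul, Matrix.transpose_apply]
  simp only [hpinv, smul_add]
  rw [Finset.sum_add_distrib]
  congr 1
  · -- nonlinear part
    rw [← Finset.sum_filter_of_ne (p := fun i => B i ℓ ≠ 0)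
      (f := fun i => ((w ℓ)⁻¹ * B i ℓ) • f s (∑ m : Fin d, B i m • y m))
      (fun i _ hne h0 => hne (by simp [h0]))]
    have hterm : ∀ i ∈ (Finset.univ.filter fun i => B i ℓ ≠ 0),
        ((w ℓ)⁻¹ * B i ℓ) • f s (∑ m : Fin d, B i m • y m) = (w ℓ)⁻¹ • f s (y ℓ) := by
      intro i hi
      have hiℓ : B i ℓ ≠ 0 := (Finset.mem_filter.mp hi).2
      have hsum : (∑ m : Fin d, B i m • y m) = B i ℓ • y ℓ := by
        apply Finset.sum_eq_single ℓ
        · intro m _ hm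
          have h0 : B i m = 0 := by
            by_contra hmne
            exact hm (hone i m ℓ hmne hiℓ)
          simp [h0]
        · intro h; exact absurd (Finset.mem_univ ℓ) h
      rcases hentries i ℓ with h1 | h1 | h1
      · -- B i ℓ = -1
        rcases hcase with hodd | hsync
        · rw [hsum, h1]
          have hneg : ((-1 : ℝ)) • y ℓ = -(y ℓ) := by simp
          rw [hneg, hodd, smul_neg, mul_neg_one, neg_smul, neg_neg]
        · exfalso
          obtain ⟨j, hj⟩ := Finset.card_eq_one.mp (hsync i)
          have hjmem : j ∈ Finset.univ.filter fun j => B i j = 1 := by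
            rw [hj]; exact Finset.mem_singleton_self j
          have hj1 : B i j = 1 := (Finset.mem_filter.mp hjmem).2
          have hjℓ : j = ℓ := hone i j ℓ (by rw [hj1]; norm_num) hiℓ
          rw [hjℓ, h1] at hj1; norm_num at hj1
      · exact absurd h1 hiℓ
      · rw [hsum, h1, mul_one, one_smul]
    rw [Finset.sum_congr rfl hterm, Finset.sum_const, ← Nat.cast_smul_eq_nsmul ℝ,
      smul_smul]
    rw [show ((Finset.univ.filter fun i => B i ℓ ≠ 0).card : ℝ) = w ℓ from rfl,
      mul_inv_cancel₀ (hwne ℓ), one_smul]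
  · -- linear part
    have hlin : (∑ i : Fin n, ((w ℓ)⁻¹ * B i ℓ) •
        H.mulVec (∑ j : Fin n, M i j • (∑ m : Fin d, B j m • y m)))
        = H.mulVec (∑ i : Fin n, ((w ℓ)⁻¹ * B i ℓ) •
            (∑ j : Fin n, M i j • (∑ m : Fin d, B j m • y m))) := by
      rw [← Matrix.mulVecLin_apply, map_sum]
      apply Finset.sum_congr rfl
      intro i _
      rw [_root_.map_smul, Matrix.mulVecLin_apply]
    have hentry : ∀ m, (((Bᵀ * B)⁻¹ * Bᵀ) * M * B) ℓ m
        = ∑ j, (∑ i, ((w ℓ)⁻¹ * B i ℓ) * M i j) * B j m := by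
      intro m
      rw [Matrix.mul_apply]
      refine Finset.sum_congr rfl fun j _ => ?_
      rw [Matrix.mul_apply]
      exact congrArg (· * B j m)
        (Finset.sum_congr rfl fun i _ => by rw [hpinv])
    have hsum2 : (∑ i : Fin n, ((w ℓ)⁻¹ * B i ℓ) •
          (∑ j : Fin n, M i j • (∑ m : Fin d, B j m • y m)))
        = ∑ m : Fin d, (((Bᵀ * B)⁻¹ * Bᵀ) * M * B) ℓ m • y m := by
      simp only [hentry, Finset.smul_sum, smul_smul, Finset.sum_smul, Finset.sum_mul]
      rw [sum_comm3 (fun i j m => ((w ℓ)⁻¹ * B i ℓ * (M i j * B j m)) • y m)]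
      simp only [mul_assoc]
    rw [hlin, hsum2]
end
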